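/- Consider the reduction dataset built from a 2-CNF formula F over n variables with m clauses, where m < n², and let 0 ≤ r ≤ m. If there exist w ∈ ℝ^n with all coordinates nonzero and a bonus vector v on the dataset with at most m − r nonzero values such that the adjusted scores are non-increasing along the ranking π of the reduction, then there exists an assignment τ and at least r clause indices such that, for each of these clauses, exactly one of its two literals is true under τ. -/

import Mathlib

/-- The position (0-indexed) of the clause point `p_i` in the ranking `π` of the
reduction: the dataset consists of `(m+1)·n²` zero points and `m` clause points,
listed as `n²` zeros, `p_1`, `n²` zeros, `p_2`, …, `p_m`, `n²` zeros. -/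
def clauseIdx (n m : ℕ) (i : Fin m) : Fin ((m + 1) * n ^ 2 + m) :=
  ⟨((i : ℕ) + 1) * n ^ 2 + (i : ℕ), by
    have h1 : ((i : ℕ) + 1) * n ^ 2 ≤ (m + 1) * n ^ 2 :=
      Nat.mul_le_mul_right _ (Nat.succ_le_succ i.isLt.le)
    exact add_lt_add_of_le_of_lt h1 i.isLt⟩

/-- The literal with sign `s ∈ {1, −1}` on a variable with truth value `b` is true:
a positive literal (`s = 1`) is true when `b = true`, a negated literal (`s = −1`)
is true when `b = false`. -/
def litTrue (s : ℝ) (b : Bool) : Prop :=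
  (s = 1 ∧ b = true) ∨ (s = -1 ∧ b = false)

/-- soundness of the reduction: for the reduction dataset of a 2-CNF
formula with `m < n²` clauses and `0 ≤ r ≤ m`, if some `w ∈ ℝ^n` with all coordinates
nonzero and some bonus vector `V` with at most `m − r` nonzero values make the adjusted
scores non-increasing along the ranking `π`, then some assignment `τ` makes exactly one
literal true in each of at least `r` clauses. -/
theorem stmt_4 (n m r : ℕ) (hm : m < n ^ 2) (hr : r ≤ m)
    (va vb : Fin m → Fin n) (sa sb : Fin m → ℝ)
    (hvab : ∀ i, va i ≠ vb i)
    (hsa : ∀ i, sa i = 1 ∨ sa i = -1) (hsb : ∀ i, sb i = 1 ∨ sb i = -1)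
    (p : Fin m → Fin n → ℝ)
    (hp : ∀ i j, p i j =
      (if j = va i then sa i else 0) + (if j = vb i then sb i else 0))
    (D : Fin ((m + 1) * n ^ 2 + m) → Fin n → ℝ)
    (hD1 : ∀ i, D (clauseIdx n m i) = p i)
    (hD2 : ∀ idx, (∀ i, idx ≠ clauseIdx n m i) → D idx = 0)
    (w : Fin n → ℝ) (hw : ∀ j, w j ≠ 0)
    (V : Fin ((m + 1) * n ^ 2 + m) → ℝ)
    (hVcard : (Finset.univ.filter fun idx => V idx ≠ 0).card ≤ m - r)
    (hreal : ∀ idx idx' : Fin ((m + 1) * n ^ 2 + m), idx ≤ idx' →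
      (∑ j, w j * D idx' j) + V idx' ≤ (∑ j, w j * D idx j) + V idx) :
    ∃ τ : Fin n → Bool, ∃ R : Finset (Fin m), r ≤ R.card ∧
      ∀ i ∈ R, Xor' (litTrue (sa i) (τ (va i))) (litTrue (sb i) (τ (vb i))) := by
  classical
  have hcval : ∀ i : Fin m, ((clauseIdx n m i) : ℕ) = (i : ℕ) * (n ^ 2 + 1) + n ^ 2 := by
    intro i
    show ((i : ℕ) + 1) * n ^ 2 + (i : ℕ) = _
    ring
  -- each block of n² zeros contains a point with V = 0
  have hblock : ∀ k : ℕ, k ≤ m → ∃ idx : Fin ((m + 1) * n ^ 2 + m),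
      (∃ t, t < n ^ 2 ∧ (idx : ℕ) = k * (n ^ 2 + 1) + t) ∧ V idx = 0 := by
    intro k hk
    by_contra hcon
    push_neg at hcon
    have hb : ∀ t : Fin (n ^ 2), k * (n ^ 2 + 1) + (t : ℕ) < (m + 1) * n ^ 2 + m := by
      intro t
      have h1 : k * (n ^ 2 + 1) ≤ m * (n ^ 2 + 1) := Nat.mul_le_mul_right _ hk
      have h2 : (m + 1) * n ^ 2 = m * n ^ 2 + n ^ 2 := by ring
      have h3 : m * (n ^ 2 + 1) = m * n ^ 2 + m := by ring
      have := t.isLt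
      omega
    set f : Fin (n ^ 2) → Fin ((m + 1) * n ^ 2 + m) :=
      fun t => ⟨k * (n ^ 2 + 1) + (t : ℕ), hb t⟩ with hf
    have hinj : Function.Injective f := by
      intro a b hab
      have h := congrArg Fin.val hab
      simp only [hf] at h
      exact Fin.ext (by omega)
    have hsub : Finset.univ.image f ⊆ Finset.univ.filter (fun idx => V idx ≠ 0) := by
      intro x hx
      simp only [Finset.mem_image] at hx
      obtain ⟨t, -, rfl⟩ := hx
      simp only [Finset.mem_filter, Finset.mem_univ, true_and]
      exact hcon _ ⟨t, t.isLt, rfl⟩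
    have hcard := Finset.card_le_card hsub
    rw [Finset.card_image_of_injective _ hinj] at hcard
    simp only [Finset.card_univ, Fintype.card_fin] at hcard
    omega
  -- score at a zero point is just V
  have hzero : ∀ idx : Fin ((m + 1) * n ^ 2 + m),
      (∃ k t, t < n ^ 2 ∧ (idx : ℕ) = k * (n ^ 2 + 1) + t) →
      (∑ j, w j * D idx j) + V idx = V idx := by
    rintro idx ⟨k, t, ht, hval⟩
    have hD : D idx = 0 := by
      apply hD2
      intro i hi
      have h1 : (idx : ℕ) = (i : ℕ) * (n ^ 2 + 1) + n ^ 2 := by rw [hi, hcval i]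
      have h2 := congrArg (· % (n ^ 2 + 1)) (hval.symm.trans h1)
      rw [mul_comm k _, mul_comm (i : ℕ) _, Nat.mul_add_mod, Nat.mul_add_mod,
        Nat.mod_eq_of_lt (by omega), Nat.mod_eq_of_lt (by omega)] at h2
      omega
    rw [hD]
    simp
  -- score at a clause point
  have hscore : ∀ i : Fin m, (∑ j, w j * D (clauseIdx n m i) j)
      = w (va i) * sa i + w (vb i) * sb i := by
    intro i
    rw [hD1]
    have hsplit : (∑ j, w j * p i j) =
        (∑ j, if j = va i then w j * sa i else 0) +
        (∑ j, if j = vb i then w j * sb i else 0) := by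
      rw [← Finset.sum_add_distrib]
      apply Finset.sum_congr rfl
      intro j _
      rw [hp]
      split_ifs <;> ring
    rw [hsplit, Finset.sum_ite_eq' Finset.univ (va i) (fun j => w j * sa i),
      Finset.sum_ite_eq' Finset.univ (vb i) (fun j => w j * sb i)]
    simp
  set τ : Fin n → Bool := fun j => decide (0 < w j) with hτ
  have hdt : ∀ j, τ j = true ↔ 0 < w j := by
    intro j; simp [hτ]
  have hdf : ∀ j, τ j = false ↔ w j < 0 := by
    intro j
    simp only [hτ, decide_eq_false_iff_not, not_lt]
    exact ⟨fun h => lt_of_le_of_ne h (hw j), le_of_lt⟩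
  have hlit : ∀ (s : ℝ) (j : Fin n), (s = 1 ∨ s = -1) →
      (litTrue s (τ j) ↔ 0 < w j * s) := by
    intro s j hs
    rcases hs with h | h <;> subst h <;> unfold litTrue
    · constructor
      · rintro (⟨-, hb⟩ | ⟨hb, -⟩)
        · have := (hdt j).mp hb; nlinarith
        · norm_num at hb
      · intro hpos
        exact Or.inl ⟨rfl, (hdt j).mpr (by nlinarith)⟩
    · constructor
      · rintro (⟨hb, -⟩ | ⟨-, hb⟩)
        · norm_num at hb
        · have := (hdf j).mp hb; nlinarith
      · intro hpos
        exact Or.inr ⟨rfl, (hdf j).mpr (by nlinarith)⟩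
  have hcinj : Function.Injective (clauseIdx n m) := by
    intro a b hab
    have h := congrArg Fin.val hab
    rw [hcval, hcval] at h
    have h2 : (a : ℕ) * (n ^ 2 + 1) = (b : ℕ) * (n ^ 2 + 1) := by omega
    exact Fin.ext (Nat.eq_of_mul_eq_mul_right (Nat.succ_pos _) h2)
  refine ⟨τ, Finset.univ.filter (fun i => V (clauseIdx n m i) = 0), ?_, ?_⟩
  · have hcomp : (Finset.univ.filter (fun i => ¬ V (clauseIdx n m i) = 0)).card ≤ m - r := by
      refine le_trans ?_ hVcard
      apply Finset.card_le_card_of_injOn (clauseIdx n m)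
      · intro i hi
        simp only [Finset.mem_coe, Finset.mem_filter, Finset.mem_univ, true_and] at hi ⊢
        exact hi
      · exact hcinj.injOn
    have hsplit := Finset.card_filter_add_card_filter_not
      (s := (Finset.univ : Finset (Fin m))) (p := fun i => V (clauseIdx n m i) = 0)
    simp only [Finset.card_univ, Fintype.card_fin] at hsplit
    omega
  · intro i hi
    have hVi : V (clauseIdx n m i) = 0 := (Finset.mem_filter.mp hi).2
    obtain ⟨idx1, ⟨t1, ht1, hv1⟩, hV1⟩ := hblock (i : ℕ) i.isLt.le
    obtain ⟨idx2, ⟨t2, ht2, hv2⟩, hV2⟩ := hblock ((i : ℕ) + 1) i.isLt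
    have hle1 : idx1 ≤ clauseIdx n m i := by
      rw [Fin.le_def, hcval, hv1]
      omega
    have hle2 : clauseIdx n m i ≤ idx2 := by
      rw [Fin.le_def, hcval, hv2]
      have : ((i : ℕ) + 1) * (n ^ 2 + 1) = (i : ℕ) * (n ^ 2 + 1) + (n ^ 2 + 1) := by ring
      omega
    have h1 := hreal idx1 _ hle1
    have h2 := hreal _ idx2 hle2
    rw [hzero idx1 ⟨(i : ℕ), t1, ht1, hv1⟩, hV1] at h1
    rw [hzero idx2 ⟨(i : ℕ) + 1, t2, ht2, hv2⟩, hV2] at h2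
    rw [hscore, hVi] at h1 h2
    have heq : w (va i) * sa i + w (vb i) * sb i = 0 := by linarith
    have ha : w (va i) * sa i ≠ 0 :=
      mul_ne_zero (hw _) (by rcases hsa i with h | h <;> rw [h] <;> norm_num)
    rw [Xor', hlit _ _ (hsa i), hlit _ _ (hsb i)]
    rcases lt_or_gt_of_ne ha with h | h
    · exact Or.inr ⟨by linarith, not_lt.mpr (by linarith)⟩
    · exact Or.inl ⟨h, not_lt.mpr (by linarith)⟩
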